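/- For every positive integer m, the set C_m of m-row Cauchon diagrams, regarded as the set of words over the alphabet Σ_m whose concatenation yields a Cauchon diagram, is a regular language: there is a deterministic finite automaton over Σ_m accepting exactly the words corresponding to Cauchon diagrams. -/

import Mathlib

/-- An `m × n` diagram: each square is black or white (`true` = white). -/
abbrev Diagram (m n : ℕ) := Fin m → Fin n → Bool

/-- The alphabet `Σ_m` of `m × 1` columns. -/
abbrev Col (m : ℕ) := Fin m → Bool

/-- The `m × n` diagram corresponding to a word of `n` columns (concatenated
from left to right). -/
def toDiagram {m : ℕ} (w : List (Col m)) : Diagram m w.length :=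
  fun i j => (w.get j) i

/-- A diagram is Cauchon if for every black square, either all squares to its
left in its row are black, or all squares above it in its column are black. -/
def IsCauchon {m n : ℕ} (D : Diagram m n) : Prop :=
  ∀ (i : Fin m) (j : Fin n), D i j = false →
    (∀ j' : Fin n, j' < j → D i j' = false) ∨
    (∀ i' : Fin m, i' < i → D i' j = false)

open scoped Classical

namespace CauchonAux

variable {m : ℕ}

/-- Condition for appending column `c` after word `w`. -/
def GoodSnoc (w : List (Col m)) (c : Col m) : Prop :=
  ∀ i : Fin m, c i = false →
    (∀ c' ∈ w, c' i = false) ∨ (∀ i' : Fin m, i' < i → c i' = false)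

/-- List-level Cauchon condition. -/
def Good (w : List (Col m)) : Prop :=
  ∀ (j : ℕ) (hj : j < w.length), GoodSnoc (w.take j) (w[j])

def colOK (s : Fin m → Bool) (c : Col m) : Prop :=
  ∀ i : Fin m, c i = false → s i = true ∨ ∀ i' : Fin m, i' < i → c i' = false

instance (s : Fin m → Bool) (c : Col m) : Decidable (colOK s c) := by
  unfold colOK; infer_instance

def step (s : Option (Fin m → Bool)) (c : Col m) : Option (Fin m → Bool) :=
  s.bind fun s => if colOK s c then some (fun i => s i && !c i) else none

def M (m : ℕ) : DFA (Col m) (Option (Fin m → Bool)) :=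
  ⟨step, some (fun _ => true), {s | s.isSome}⟩

lemma M_step (s : Option (Fin m → Bool)) (c : Col m) : (M m).step s c = step s c := rfl

lemma good_append (w : List (Col m)) (c : Col m) :
    Good (w ++ [c]) ↔ Good w ∧ GoodSnoc w c := by
  constructor
  · intro h
    constructor
    · intro j hj
      have h' := h j (by simp; omega)
      simpa [List.getElem_append_left hj, List.take_append_of_le_length hj.le] using h'
    · have h' := h w.length (by simp)
      simpa using h'
  · rintro ⟨h1, h2⟩ j hj
    rcases lt_or_eq_of_le (Nat.lt_succ_iff.mp (by simpa using hj)) with h | h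
    · have := h1 j h
      simpa [List.getElem_append_left h, List.take_append_of_le_length h.le] using this
    · subst h
      simpa using h2

lemma eval_eq (w : List (Col m)) :
    (M m).evalFrom (M m).start w =
      if Good w then some (fun i => decide (∀ c ∈ w, c i = false)) else none := by
  induction w using List.reverseRecOn with
  | nil =>
      rw [if_pos (by intro j hj; simp at hj)]
      simp [M, DFA.evalFrom_nil]
  | append_singleton w c ih =>
      rw [DFA.evalFrom_append_singleton, ih]
      by_cases hw : Good w
      · rw [if_pos hw]
        have hcol : colOK (fun i => decide (∀ c' ∈ w, c' i = false)) c ↔ GoodSnoc w c := by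
          unfold colOK GoodSnoc
          simp
        by_cases hc : GoodSnoc w c
        · rw [if_pos ((good_append w c).mpr ⟨hw, hc⟩), M_step]
          simp only [step, Option.bind_some]
          rw [if_pos (hcol.mpr hc)]
          congr 1
          funext i
          cases hci : c i <;> simp [hci, List.forall_mem_append]
          · constructor
            · rintro h c' (hc' | rfl)
              · exact h c' hc'
              · exact hci
            · exact fun h c' hc' => h c' (Or.inl hc')
        · rw [if_neg (by rw [good_append]; tauto), M_step]
          simp only [step, Option.bind_some]
          rw [if_neg (by rw [hcol]; exact hc)]
      · rw [if_neg hw, if_neg (by rw [good_append]; tauto), M_step]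
        rfl

lemma good_iff (w : List (Col m)) : Good w ↔ IsCauchon (toDiagram w) := by
  constructor
  · intro h i j hij
    rcases h j.1 j.2 i (by simpa [toDiagram] using hij) with h' | h'
    · left
      intro j' hj'
      have hm : (w.get j') ∈ w.take j.1 := by
        rw [List.mem_take_iff_getElem]
        exact ⟨j'.1, by omega, by simp⟩
      exact h' _ hm
    · right
      intro i' hi'
      simpa [toDiagram] using h' i' hi'
  · intro h j hj i hij
    rcases h i ⟨j, hj⟩ (by simpa [toDiagram] using hij) with h' | h'
    · left
      intro c' hc'
      rw [List.mem_take_iff_getElem] at hc'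
      obtain ⟨j', hj', rfl⟩ := hc'
      have := h' ⟨j', by omega⟩ (by simp; omega)
      simpa [toDiagram] using this
    · right
      intro i' hi'
      simpa [toDiagram] using h' i' hi'

end CauchonAux

/-- For every positive integer `m`, the set of words over the
alphabet `Σ_m` of `m × 1` columns whose concatenation is a Cauchon diagram is a
regular language (accepted by some finite deterministic automaton). -/
theorem cauchon_regular (m : ℕ) (hm : 0 < m) :
    Language.IsRegular ({ w : List (Col m) | IsCauchon (toDiagram w) } :
      Language (Col m)) := by
  refine ⟨Option (Fin m → Bool), inferInstance, CauchonAux.M m, ?_⟩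
  ext w
  rw [DFA.mem_accepts, DFA.eval, CauchonAux.eval_eq]
  by_cases h : CauchonAux.Good w
  · simp only [CauchonAux.M, Set.mem_setOf_eq, if_pos h, Option.isSome_some, Set.mem_setOf_eq]
    exact iff_of_true trivial ((CauchonAux.good_iff w).mp h)
  · simp only [CauchonAux.M, Set.mem_setOf_eq, if_neg h, Option.isSome_none, Set.mem_setOf_eq]
    simp only [Bool.false_eq_true, false_iff]
    exact fun hc => h ((CauchonAux.good_iff w).mpr hc)
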